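/- The greatest lower bound z = p ∧ q in the majorization order, defined by z_1 = min(p_1,q_1) and z_i = min(∑_{j=1}^i p_j, ∑_{j=1}^i q_j) − ∑_{j=1}^{i-1} z_j, is indeed a probability vector sorted in non-increasing order, is majorized by both p and q, and any vector majorized by both p and q is majorized by z. -/
import Mathlib


open Finset

/-- Majorization via prefix sums (vectors as functions ℕ → ℝ, padded with zeros). -/
def Maj (p q : ℕ → ℝ) : Prop :=
  ∀ i : ℕ, ∑ k ∈ Finset.range i, p k ≤ ∑ k ∈ Finset.range i, q k

/-- A probability vector of length `n`, sorted non-increasingly, zero beyond `n`. -/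
def IsProbVec (n : ℕ) (p : ℕ → ℝ) : Prop :=
  (∀ i, 0 ≤ p i) ∧ (∀ i j : ℕ, i ≤ j → p j ≤ p i) ∧
  (∑ k ∈ Finset.range n, p k = 1) ∧ (∀ i, n ≤ i → p i = 0)

/-- The greatest lower bound `p ∧ q` in the majorization lattice. -/
noncomputable def meet (p q : ℕ → ℝ) : ℕ → ℝ := fun i =>
  min (∑ k ∈ Finset.range (i + 1), p k) (∑ k ∈ Finset.range (i + 1), q k) -
  min (∑ k ∈ Finset.range i, p k) (∑ k ∈ Finset.range i, q k)

/-- Shannon entropy (base 2) of the first `n` components. -/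
noncomputable def H2 (n : ℕ) (p : ℕ → ℝ) : ℝ :=
  ∑ k ∈ Finset.range n, -(p k * Real.logb 2 (p k))

/-- Shannon entropy (base 2) of the entries of an `n × m` matrix. -/
noncomputable def Hmat (n m : ℕ) (M : ℕ → ℕ → ℝ) : ℝ :=
  ∑ i ∈ Finset.range n, ∑ j ∈ Finset.range m, -(M i j * Real.logb 2 (M i j))

/-- `M` is a coupling of `p` and `q`: nonnegative, row sums `p`, column sums `q`. -/
def IsCoupling (n m : ℕ) (p q : ℕ → ℝ) (M : ℕ → ℕ → ℝ) : Prop :=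
  (∀ i j, 0 ≤ M i j) ∧ (∀ i < n, ∑ j ∈ Finset.range m, M i j = p i) ∧
  (∀ j < m, ∑ i ∈ Finset.range n, M i j = q j)

/-- The `half` operator: duplicates and halves each component. -/
noncomputable def half (p : ℕ → ℝ) : ℕ → ℝ := fun i => p (i / 2) / 2

/-- Iterated `half` operator. -/
noncomputable def halfIter : ℕ → (ℕ → ℝ) → (ℕ → ℝ)
  | 0, p => p
  | (i + 1), p => half (halfIter i p)

/-- Iterated majorization meet of `p 0, p 1, …, p k`. -/
noncomputable def bigMeet (p : ℕ → ℕ → ℝ) : ℕ → (ℕ → ℝ)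
  | 0 => p 0
  | (k + 1) => meet (bigMeet p k) (p (k + 1))


lemma sum_meet (p q : ℕ → ℝ) (i : ℕ) :
    ∑ k ∈ Finset.range i, meet p q k
      = min (∑ k ∈ Finset.range i, p k) (∑ k ∈ Finset.range i, q k) := by
  induction i with
  | zero => simp
  | succ i ih => rw [Finset.sum_range_succ, ih, meet]; ring

lemma key_ineq (A0 B0 a1 a2 b1 b2 : ℝ) (ha : a2 ≤ a1) (hb : b2 ≤ b1) :
    min (A0 + a1 + a2) (B0 + b1 + b2) + min A0 B0 ≤ 2 * min (A0 + a1) (B0 + b1) := by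
  simp only [min_def]; split_ifs <;> linarith

theorem stmt3 (n : ℕ) (p q : ℕ → ℝ) (hp : IsProbVec n p) (hq : IsProbVec n q) :
    IsProbVec n (meet p q) ∧ Maj (meet p q) p ∧ Maj (meet p q) q ∧
    ∀ x : ℕ → ℝ, IsProbVec n x → Maj x p → Maj x q → Maj x (meet p q) := by
  obtain ⟨hp0, hps, hp1, hpz⟩ := hp
  obtain ⟨hq0, hqs, hq1, hqz⟩ := hq
  have hPfull : ∀ i, n ≤ i → ∑ k ∈ Finset.range i, p k = 1 := by
    intro i hi
    rw [← hp1]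
    exact (Finset.sum_subset (Finset.range_subset_range.2 hi)
      (fun x _ hx => hpz x (by simpa using hx))).symm
  have hQfull : ∀ i, n ≤ i → ∑ k ∈ Finset.range i, q k = 1 := by
    intro i hi
    rw [← hq1]
    exact (Finset.sum_subset (Finset.range_subset_range.2 hi)
      (fun x _ hx => hqz x (by simpa using hx))).symm
  have hnn : ∀ i, 0 ≤ meet p q i := by
    intro i
    have : min (∑ k ∈ Finset.range i, p k) (∑ k ∈ Finset.range i, q k)
        ≤ min (∑ k ∈ Finset.range (i+1), p k) (∑ k ∈ Finset.range (i+1), q k) := by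
      apply min_le_min <;> rw [Finset.sum_range_succ]
      · linarith [hp0 i]
      · linarith [hq0 i]
    simpa [meet] using sub_nonneg.2 this
  have hstep : ∀ i, meet p q (i+1) ≤ meet p q i := by
    intro i
    have h := key_ineq (∑ k ∈ Finset.range i, p k) (∑ k ∈ Finset.range i, q k)
      (p i) (p (i+1)) (q i) (q (i+1)) (hps i (i+1) (Nat.le_succ i)) (hqs i (i+1) (Nat.le_succ i))
    simp only [meet]
    rw [Finset.sum_range_succ p (i+1), Finset.sum_range_succ p i,
        Finset.sum_range_succ q (i+1), Finset.sum_range_succ q i]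
    linarith
  have hanti : ∀ i j : ℕ, i ≤ j → meet p q j ≤ meet p q i :=
    fun i j hij => antitone_nat_of_succ_le hstep hij
  refine ⟨⟨hnn, hanti, ?_, ?_⟩, ?_, ?_, ?_⟩
  · rw [sum_meet, hp1, hq1]; simp
  · intro i hi
    have h1 : ∑ k ∈ Finset.range (i+1), meet p q k = 1 := by
      rw [sum_meet, hPfull _ (le_trans hi (Nat.le_succ i)), hQfull _ (le_trans hi (Nat.le_succ i))]; simp
    have h2 : ∑ k ∈ Finset.range i, meet p q k = 1 := by
      rw [sum_meet, hPfull _ hi, hQfull _ hi]; simp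
    have := Finset.sum_range_succ (meet p q) i
    rw [h1, h2] at this; linarith
  · intro i; rw [sum_meet]; exact min_le_left _ _
  · intro i; rw [sum_meet]; exact min_le_right _ _
  · intro x _ hxp hxq i
    rw [sum_meet]
    exact le_min (hxp i) (hxq i)
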